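/- Let I be the ideal of ℂ[X₁,…,Xₙ] generated by finitely many polynomials P₁,…,P_s ∈ ℂ[X₁,…,Xₙ], and set P := P₁*P₁ + ⋯ + P_s*P_s. Then for every positive definite linear functional Λ on ℂ[X₁,…,Xₙ], Λ vanishes on I if and only if Λ vanishes on the ideal (P) generated by P. -/

import Mathlib

open MeasureTheory
open scoped ComplexOrder

noncomputable def evalC {n : ℕ} (P : MvPolynomial (Fin n) ℂ) (x : Fin n → ℝ) : ℂ :=
  MvPolynomial.aeval (fun i => (x i : ℂ)) P

noncomputable def starC {n : ℕ} (P : MvPolynomial (Fin n) ℂ) : MvPolynomial (Fin n) ℂ :=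
  MvPolynomial.map (starRingEnd ℂ) P

def IsPosDefC {n : ℕ} (Λ : MvPolynomial (Fin n) ℂ →ₗ[ℂ] ℂ) : Prop :=
  ∀ P : MvPolynomial (Fin n) ℂ, 0 ≤ Λ (starC P * P)

def IsMomentC {n : ℕ} (Λ : MvPolynomial (Fin n) ℂ →ₗ[ℂ] ℂ) : Prop :=
  ∃ μ : Measure (Fin n → ℝ),
    (∀ Q : MvPolynomial (Fin n) ℂ, Integrable (fun x => evalC Q x) μ) ∧
    (∀ Q : MvPolynomial (Fin n) ℂ, Λ Q = ∫ x, evalC Q x ∂μ)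

noncomputable def vanishingIdealC {n : ℕ} (Z : Set (Fin n → ℝ)) :
    Ideal (MvPolynomial (Fin n) ℂ) where
  carrier := {P | ∀ x ∈ Z, evalC P x = 0}
  add_mem' := by
    intro a b ha hb x hx
    simp only [Set.mem_setOf_eq, evalC, map_add] at *
    rw [ha x hx, hb x hx, add_zero]
  zero_mem' := by
    intro x hx
    simp [evalC]
  smul_mem' := by
    intro c a ha x hx
    simp only [Set.mem_setOf_eq, evalC, smul_eq_mul, map_mul] at *
    rw [ha x hx, mul_zero]

def zeroSetC {n : ℕ} (I : Ideal (MvPolynomial (Fin n) ℂ)) : Set (Fin n → ℝ) :=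
  {x | ∀ P ∈ I, evalC P x = 0}

def zSetC {n : ℕ} (P : MvPolynomial (Fin n) ℂ) : Set (Fin n → ℝ) :=
  {x | evalC P x = 0}

def VanishesOnC {n : ℕ} (Λ : MvPolynomial (Fin n) ℂ →ₗ[ℂ] ℂ)
    (I : Ideal (MvPolynomial (Fin n) ℂ)) : Prop :=
  ∀ P ∈ I, Λ P = 0

def nSetC {n : ℕ} (Λ : MvPolynomial (Fin n) ℂ →ₗ[ℂ] ℂ) : Set (MvPolynomial (Fin n) ℂ) :=
  {P | Λ (starC P * P) = 0}

def IsTypeAC {n : ℕ} (P : MvPolynomial (Fin n) ℂ) : Prop :=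
  ∀ Λ : MvPolynomial (Fin n) ℂ →ₗ[ℂ] ℂ,
    IsPosDefC Λ → VanishesOnC Λ (Ideal.span {P}) → IsMomentC Λ

lemma starC_mul (P Q : MvPolynomial (Fin n) ℂ) : starC (P * Q) = starC P * starC Q := by
  simp [starC, map_mul]

lemma starC_add (P Q : MvPolynomial (Fin n) ℂ) : starC (P + Q) = starC P + starC Q := by
  simp [starC, map_add]

lemma starC_one : starC (1 : MvPolynomial (Fin n) ℂ) = 1 := by
  simp [starC]

lemma starC_C (c : ℂ) : starC (MvPolynomial.C c : MvPolynomial (Fin n) ℂ)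
    = MvPolynomial.C (starRingEnd ℂ c) := by
  simp [starC]

lemma starC_starC (P : MvPolynomial (Fin n) ℂ) : starC (starC P) = P := by
  rw [starC, starC, MvPolynomial.map_map]
  have : (starRingEnd ℂ).comp (starRingEnd ℂ) = RingHom.id ℂ := by
    ext z; exact Complex.conj_conj z
  rw [this, MvPolynomial.map_id]

lemma lam_star {Λ : MvPolynomial (Fin n) ℂ →ₗ[ℂ] ℂ} (hΛ : IsPosDefC Λ)
    (Q : MvPolynomial (Fin n) ℂ) : Λ (starC Q) = starRingEnd ℂ (Λ Q) := by
  have h0 : 0 ≤ Λ 1 := by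
    have := hΛ 1; rwa [starC_one, one_mul] at this
  have hq : 0 ≤ Λ (starC Q * Q) := hΛ Q
  have h1 : 0 ≤ Λ 1 + Λ Q + Λ (starC Q) + Λ (starC Q * Q) := by
    have h := hΛ (1 + Q)
    have hp : starC (1 + Q) * (1 + Q) = 1 + Q + starC Q + starC Q * Q := by
      rw [starC_add, starC_one]; ring
    rw [hp] at h
    simpa [map_add] using h
  have hs : starC (Complex.I • Q) = (-Complex.I) • starC Q := by
    rw [MvPolynomial.smul_eq_C_mul, starC_mul, starC_C, MvPolynomial.smul_eq_C_mul]
    simp [Complex.conj_I]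
  have h2 : 0 ≤ Λ 1 + Complex.I * Λ Q - Complex.I * Λ (starC Q) + Λ (starC Q * Q) := by
    have h := hΛ (1 + Complex.I • Q)
    have hp : starC (1 + Complex.I • Q) * (1 + Complex.I • Q)
        = 1 + Complex.I • Q - Complex.I • starC Q + starC Q * Q := by
      rw [starC_add, starC_one, hs]
      simp only [MvPolynomial.smul_eq_C_mul]
      rw [sub_eq_add_neg]
      have hI : (MvPolynomial.C (-Complex.I) : MvPolynomial (Fin n) ℂ)
          * MvPolynomial.C Complex.I = 1 := by
        rw [← MvPolynomial.C_mul]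
        simp [Complex.I_mul_I]
      calc (1 + MvPolynomial.C (-Complex.I) * starC Q) * (1 + MvPolynomial.C Complex.I * Q)
          = 1 + MvPolynomial.C Complex.I * Q + MvPolynomial.C (-Complex.I) * starC Q
            + (MvPolynomial.C (-Complex.I) * MvPolynomial.C Complex.I) * (starC Q * Q) := by
              ring
        _ = _ := by
              rw [hI, one_mul]
              simp only [MvPolynomial.C_neg]
              ring
    rw [hp] at h
    simpa [map_add, map_sub, _root_.map_smul, smul_eq_mul] using h
  rw [Complex.le_def] at h0 hq h1 h2
  have o_im : (Λ 1).im = 0 := by simpa using h0.2.symm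
  have B_im : (Λ (starC Q * Q)).im = 0 := by simpa using hq.2.symm
  have e1 : (Λ Q).im + (Λ (starC Q)).im = 0 := by
    have h := h1.2
    simp only [Complex.add_im, Complex.zero_im] at h
    rw [o_im, B_im] at h; linarith
  have e2 : (Λ Q).re - (Λ (starC Q)).re = 0 := by
    have h := h2.2
    simp only [Complex.add_im, Complex.sub_im, Complex.mul_im, Complex.I_re, Complex.I_im,
      Complex.zero_im] at h
    rw [o_im, B_im] at h; linarith
  apply Complex.ext
  · rw [Complex.conj_re]; linarith
  · rw [Complex.conj_im]; linarith

lemma lam_mul_zero {Λ : MvPolynomial (Fin n) ℂ →ₗ[ℂ] ℂ} (hΛ : IsPosDefC Λ)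
    {R : MvPolynomial (Fin n) ℂ} (hR : Λ (starC R * R) = 0)
    (Q : MvPolynomial (Fin n) ℂ) : Λ (Q * R) = 0 := by
  suffices h : ∀ Q : MvPolynomial (Fin n) ℂ, Λ (starC Q * R) = 0 by
    have := h (starC Q)
    rwa [starC_starC] at this
  intro Q
  set a := Λ (starC Q * R) with ha
  set B := Λ (starC Q * Q) with hB
  have hconj : Λ (starC R * Q) = starRingEnd ℂ a := by
    have h : starC (starC Q * R) = starC R * Q := by
      rw [starC_mul, starC_starC, mul_comm]
    rw [← h, lam_star hΛ]
  have key : ∀ s : ℝ, 0 ≤ B - ((2 * s * Complex.normSq a : ℝ) : ℂ) := by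
    intro s
    set t : ℂ := -(s : ℂ) * starRingEnd ℂ a with ht
    have hpos := hΛ (Q + t • R)
    have hst : starC (t • R) = (starRingEnd ℂ t) • starC R := by
      rw [MvPolynomial.smul_eq_C_mul, starC_mul, starC_C, MvPolynomial.smul_eq_C_mul]
    have hexp : starC (Q + t • R) * (Q + t • R)
        = starC Q * Q + t • (starC Q * R) + (starRingEnd ℂ t) • (starC R * Q)
          + ((starRingEnd ℂ t) * t) • (starC R * R) := by
      rw [starC_add, hst]
      simp only [MvPolynomial.smul_eq_C_mul, MvPolynomial.C_mul]
      ring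
    rw [hexp] at hpos
    simp only [map_add, _root_.map_smul, smul_eq_mul, hR, mul_zero, add_zero, hconj,
      ← ha, ← hB] at hpos
    have h1 : t * a = -(s : ℂ) * ((Complex.normSq a : ℝ) : ℂ) := by
      rw [ht, mul_assoc, mul_comm (starRingEnd ℂ a) a, Complex.mul_conj]
    have h2 : starRingEnd ℂ t * starRingEnd ℂ a = -(s : ℂ) * ((Complex.normSq a : ℝ) : ℂ) := by
      rw [ht]
      simp only [map_mul, map_neg, Complex.conj_ofReal, Complex.conj_conj]
      rw [mul_assoc, Complex.mul_conj]
    rw [h1, h2] at hpos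
    have heq : B - ((2 * s * Complex.normSq a : ℝ) : ℂ)
        = B + -(s : ℂ) * ((Complex.normSq a : ℝ) : ℂ)
          + -(s : ℂ) * ((Complex.normSq a : ℝ) : ℂ) := by
      push_cast; ring
    rw [heq]; exact hpos
  by_contra hane
  have hns : 0 < Complex.normSq a := by
    rcases lt_or_eq_of_le (Complex.normSq_nonneg a) with h | h
    · exact h
    · exact absurd (Complex.normSq_eq_zero.mp h.symm) hane
  have hkey := key ((B.re + 1) / (2 * Complex.normSq a))
  rw [Complex.le_def] at hkey
  have hre := hkey.1
  simp only [Complex.sub_re, Complex.ofReal_re, Complex.zero_re] at hre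
  have hcalc : 2 * ((B.re + 1) / (2 * Complex.normSq a)) * Complex.normSq a = B.re + 1 := by
    field_simp
  rw [hcalc] at hre
  linarith


theorem stmt_18 (n : ℕ) (hn : 0 < n) (s : ℕ)
    (Pf : Fin s → MvPolynomial (Fin n) ℂ)
    (Λ : MvPolynomial (Fin n) ℂ →ₗ[ℂ] ℂ) (hΛ : IsPosDefC Λ) :
    VanishesOnC Λ (Ideal.span (Set.range Pf)) ↔
      VanishesOnC Λ (Ideal.span {∑ i, starC (Pf i) * Pf i}) := by
  set P := ∑ i, starC (Pf i) * Pf i with hPdef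
  constructor
  · intro hV
    have hle : Ideal.span {P} ≤ Ideal.span (Set.range Pf) := by
      rw [Ideal.span_le, Set.singleton_subset_iff]
      exact Ideal.sum_mem _ fun i _ =>
        Ideal.mul_mem_left _ _ (Ideal.subset_span (Set.mem_range_self i))
    exact fun Q hQ => hV Q (hle hQ)
  · intro hV
    have hP0 : Λ P = 0 := hV P (Ideal.subset_span rfl)
    have hterm : ∀ i : Fin s, Λ (starC (Pf i) * Pf i) = 0 := by
      have := (Finset.sum_eq_zero_iff_of_nonneg
        (fun i _ => hΛ (Pf i))).mp (by rw [← map_sum]; exact hP0)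
      exact fun i => this i (Finset.mem_univ i)
    intro Q hQ
    obtain ⟨c, hc⟩ := Ideal.mem_span_range_iff_exists_fun.mp hQ
    rw [← hc, map_sum]
    exact Finset.sum_eq_zero fun i _ => lam_mul_zero hΛ (hterm i) (c i)
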